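/- Let σ : ℝ → ℝ be convex and nondecreasing, applied componentwise to vectors. Consider an input convex neural network defined recursively by l₀(x) = x and l_{i+1}(x) = σ(W_{i+1} l_i(x) + W^{(x)}_{i+1} x + b_{i+1}) for i = 0, …, L−1, where W₁ and all passthrough matrices W^{(x)}_1, …, W^{(x)}_L are arbitrary real matrices, all entries of W₂, …, W_L are nonnegative, and b₁, …, b_L are bias vectors. Then every component of the output map x ↦ l_L(x) is a convex function of the input x ∈ ℝⁿ. -/

import Mathlib

open Matrix

/-- The layers of an input convex neural network (ICNN): `l₀(x) = x` and
`l_{i+1}(x) = σ(W_{i+1} l_i(x) + W^{(x)}_{i+1} x + b_{i+1})`, where `σ` is applied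
componentwise, `d i` is the width of layer `i`, `W i` is the hidden-to-hidden weight
matrix from layer `i` to layer `i+1` (corresponding to `W_{i+1}` in the usual indexing),
`Wx i` is the passthrough matrix from the input to layer `i+1`, and `b i` is the bias of
layer `i+1`. -/
def icnnLayer (σ : ℝ → ℝ) {d : ℕ → ℕ}
    (W : ∀ i : ℕ, Matrix (Fin (d (i + 1))) (Fin (d i)) ℝ)
    (Wx : ∀ i : ℕ, Matrix (Fin (d (i + 1))) (Fin (d 0)) ℝ)
    (b : ∀ i : ℕ, Fin (d (i + 1)) → ℝ)
    (x : Fin (d 0) → ℝ) : ∀ i : ℕ, Fin (d i) → ℝ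
  | 0 => x
  | i + 1 => fun j => σ ((W i *ᵥ icnnLayer σ W Wx b x i + Wx i *ᵥ x + b i) j)

/-- Sum of convex functions over a finset is convex. -/
lemma convexOn_finset_sum {E : Type*} [AddCommGroup E] [Module ℝ E]
    {ι : Type*} (t : Finset ι) {s : Set E} (hs : Convex ℝ s) (f : ι → E → ℝ)
    (hf : ∀ i ∈ t, ConvexOn ℝ s (f i)) :
    ConvexOn ℝ s (fun x => ∑ i ∈ t, f i x) := by
  classical
  induction t using Finset.induction_on with
  | empty => simpa using convexOn_const 0 hs
  | @insert a r hni ih =>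
    have h1 := hf a (Finset.mem_insert_self a r)
    have h2 := ih (fun i hi => hf i (Finset.mem_insert_of_mem hi))
    simpa [Finset.sum_insert hni, Pi.add_def] using h1.add h2

/-- A linear-map component is convex. -/
lemma mulVec_component_convexOn {n m : ℕ} (M : Matrix (Fin m) (Fin n) ℝ) (j : Fin m) :
    ConvexOn ℝ Set.univ (fun x : Fin n → ℝ => (M *ᵥ x) j) := by
  refine ⟨convex_univ, fun x _ y _ a b _ _ _ => le_of_eq ?_⟩
  simp [Matrix.mulVec_add, Matrix.mulVec_smul]

/-- Composing with a monotone convex function preserves convexity on univ. -/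
lemma convexOn_comp_mono {E : Type*} [AddCommGroup E] [Module ℝ E]
    {σ : ℝ → ℝ} (hσconv : ConvexOn ℝ Set.univ σ) (hσmono : Monotone σ)
    {f : E → ℝ} (hf : ConvexOn ℝ Set.univ f) :
    ConvexOn ℝ Set.univ (fun x => σ (f x)) := by
  refine ⟨convex_univ, fun x _ y _ a b ha hb hab => ?_⟩
  calc σ (f (a • x + b • y)) ≤ σ (a • f x + b • f y) :=
        hσmono (hf.2 trivial trivial ha hb hab)
    _ ≤ a • σ (f x) + b • σ (f y) :=
        hσconv.2 trivial trivial ha hb hab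

/-- **Input convexity of ICNNs.** If the activation `σ` is convex and nondecreasing and
all hidden-to-hidden weight matrices `W₂, …, W_L` (i.e. `W i` for `1 ≤ i < L` in the
zero-based indexing of `icnnLayer`) have nonnegative entries, while the first weight
matrix `W₁`, the passthrough matrices `W^{(x)}₁, …, W^{(x)}_L`, and the biases are
arbitrary, then every component of the output map `x ↦ l_L(x)` is a convex function of
the input. -/
theorem icnn_output_convex
    {d : ℕ → ℕ} (L : ℕ)
    (σ : ℝ → ℝ) (hσconv : ConvexOn ℝ Set.univ σ) (hσmono : Monotone σ)
    (W : ∀ i : ℕ, Matrix (Fin (d (i + 1))) (Fin (d i)) ℝ)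
    (Wx : ∀ i : ℕ, Matrix (Fin (d (i + 1))) (Fin (d 0)) ℝ)
    (b : ∀ i : ℕ, Fin (d (i + 1)) → ℝ)
    (hW : ∀ i : ℕ, 1 ≤ i → i < L → ∀ j k, 0 ≤ W i j k) :
    ∀ j : Fin (d L),
      ConvexOn ℝ Set.univ (fun x : Fin (d 0) → ℝ => icnnLayer σ W Wx b x L j) := by
  suffices h : ∀ i : ℕ, i ≤ L → ∀ j : Fin (d i),
      ConvexOn ℝ Set.univ (fun x : Fin (d 0) → ℝ => icnnLayer σ W Wx b x i j) from
    h L le_rfl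
  intro i
  induction i with
  | zero =>
    intro _ j
    refine ⟨convex_univ, fun x _ y _ a b _ _ _ => le_of_eq ?_⟩
    simp [icnnLayer]
  | succ i ih =>
    intro hiL j
    have hirec := ih (Nat.le_of_succ_le hiL)
    -- the pre-activation is convex
    have hpre : ConvexOn ℝ Set.univ
        (fun x : Fin (d 0) → ℝ =>
          (W i *ᵥ icnnLayer σ W Wx b x i + Wx i *ᵥ x + b i) j) := by
      have haff : ConvexOn ℝ Set.univ
          (fun x : Fin (d 0) → ℝ => (Wx i *ᵥ x) j + b i j) :=
        (mulVec_component_convexOn (Wx i) j).add (convexOn_const _ convex_univ)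
      have hmain : ConvexOn ℝ Set.univ
          (fun x : Fin (d 0) → ℝ => (W i *ᵥ icnnLayer σ W Wx b x i) j) := by
        rcases Nat.eq_zero_or_pos i with hi0 | hipos
        · subst hi0
          simpa [icnnLayer] using mulVec_component_convexOn (W 0) j
        · have hWnn : ∀ j' k, 0 ≤ W i j' k := hW i hipos hiL
          have : ConvexOn ℝ Set.univ
              (fun x : Fin (d 0) → ℝ =>
                ∑ k, W i j k * icnnLayer σ W Wx b x i k) := by
            refine convexOn_finset_sum Finset.univ convex_univ _ (fun k _ => ?_)
            simpa [smul_eq_mul] using (hirec k).smul (hWnn j k)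
          simpa [Matrix.mulVec, dotProduct] using this
      simpa [add_assoc, Pi.add_apply, Pi.add_def] using hmain.add haff
    have := convexOn_comp_mono hσconv hσmono hpre
    simpa [icnnLayer] using this
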